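/- Let Q₁, Q₂ : S × A → [0,1] satisfy the safety Bellman equation under policies π₁ and π₂ respectively (same P, I, γ < 1). Then ‖Q₁ - Q₂‖_∞ ≤ (γ/(1-γ)) · max_{s'} ‖π₁(·|s') - π₂(·|s')‖_TV, where ‖·‖_TV is total variation distance (here using the bound |E_{a'∼π₁}Q₁ - E_{a'∼π₂}Q₁| ≤ TV distance since Q₁ ∈ [0,1]). -/

import Mathlib

/-- If `Q₁, Q₂ : S × A → [0,1]` satisfy the safety Bellman equation
under policies `π₁`, `π₂` respectively (same `P`, `I`, `γ < 1`), then
`‖Q₁ - Q₂‖_∞ ≤ (γ/(1-γ)) · max_{s'} ‖π₁(·|s') - π₂(·|s')‖_TV`, where total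
variation distance is the sup over `[0,1]`-valued test functions. -/
theorem stmt_7 {S A : Type*} [Fintype S] [Fintype A] [Nonempty S]
    (I : S → ℝ) (hI : ∀ s, I s = 0 ∨ I s = 1)
    (P : S → A → S → ℝ) (hP0 : ∀ s a s', 0 ≤ P s a s') (hP1 : ∀ s a, ∑ s', P s a s' = 1)
    (π₁ π₂ : S → A → ℝ)
    (hπ₁0 : ∀ s a, 0 ≤ π₁ s a) (hπ₁1 : ∀ s, ∑ a, π₁ s a = 1)
    (hπ₂0 : ∀ s a, 0 ≤ π₂ s a) (hπ₂1 : ∀ s, ∑ a, π₂ s a = 1)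
    (γ : ℝ) (hγ0 : 0 < γ) (hγ1 : γ < 1)
    (Q₁ Q₂ : S → A → ℝ)
    (hQ₁mem : ∀ s a, Q₁ s a ∈ Set.Icc (0:ℝ) 1)
    (hQ₂mem : ∀ s a, Q₂ s a ∈ Set.Icc (0:ℝ) 1)
    (hQ₁ : ∀ s a, Q₁ s a = I s + (1 - I s) * γ * ∑ s', P s a s' * ∑ a', π₁ s' a' * Q₁ s' a')
    (hQ₂ : ∀ s a, Q₂ s a = I s + (1 - I s) * γ * ∑ s', P s a s' * ∑ a', π₂ s' a' * Q₂ s' a')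
    (tv : S → ℝ)
    (htv : ∀ s', tv s' = ⨆ f : {f : A → ℝ // ∀ a, f a ∈ Set.Icc (0:ℝ) 1},
      |(∑ a, π₁ s' a * f.1 a) - ∑ a, π₂ s' a * f.1 a|) :
    ∀ s a, |Q₁ s a - Q₂ s a| ≤ γ / (1 - γ) * ⨆ s', tv s' := by
  have h1γ : (0:ℝ) < 1 - γ := by linarith
  haveI : Nonempty A := by
    by_contra h
    have : ∑ a, π₁ (Classical.arbitrary S) a = 0 := by
      rw [Finset.sum_eq_zero]
      intro a _
      exact absurd ⟨a⟩ h
    rw [hπ₁1] at this; norm_num at this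
  set T := ⨆ s', tv s' with hTdef
  have hTbdd : BddAbove (Set.range tv) := (Set.finite_range tv).bddAbove
  have htvT : ∀ s', tv s' ≤ T := fun s' => le_ciSup hTbdd s'
  -- tv s' is at least the value with test function Q₁ s'
  have htvlb : ∀ s',
      |(∑ a, π₁ s' a * Q₁ s' a) - ∑ a, π₂ s' a * Q₁ s' a| ≤ tv s' := by
    intro s'
    rw [htv s']
    have hbdd : BddAbove (Set.range fun f : {f : A → ℝ // ∀ a, f a ∈ Set.Icc (0:ℝ) 1} =>
        |(∑ a, π₁ s' a * f.1 a) - ∑ a, π₂ s' a * f.1 a|) := by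
      refine ⟨1, ?_⟩
      rintro x ⟨f, rfl⟩
      have h1 : (0:ℝ) ≤ ∑ a, π₁ s' a * f.1 a :=
        Finset.sum_nonneg fun a _ => mul_nonneg (hπ₁0 s' a) (f.2 a).1
      have h2 : ∑ a, π₁ s' a * f.1 a ≤ 1 := by
        calc ∑ a, π₁ s' a * f.1 a ≤ ∑ a, π₁ s' a :=
              Finset.sum_le_sum fun a _ => by
                nlinarith [(f.2 a).2, hπ₁0 s' a]
          _ = 1 := hπ₁1 s'
      have h3 : (0:ℝ) ≤ ∑ a, π₂ s' a * f.1 a :=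
        Finset.sum_nonneg fun a _ => mul_nonneg (hπ₂0 s' a) (f.2 a).1
      have h4 : ∑ a, π₂ s' a * f.1 a ≤ 1 := by
        calc ∑ a, π₂ s' a * f.1 a ≤ ∑ a, π₂ s' a :=
              Finset.sum_le_sum fun a _ => by
                nlinarith [(f.2 a).2, hπ₂0 s' a]
          _ = 1 := hπ₂1 s'
      rw [abs_sub_le_iff]; constructor <;> linarith
    exact le_ciSup hbdd ⟨Q₁ s', hQ₁mem s'⟩
  have hT0 : 0 ≤ T := le_trans (le_trans (abs_nonneg _) (htvlb (Classical.arbitrary S)))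
    (htvT _)
  -- D : sup norm of Q₁ - Q₂
  set D := Finset.univ.sup' (Finset.univ_nonempty (α := S × A))
    (fun p : S × A => |Q₁ p.1 p.2 - Q₂ p.1 p.2|) with hDdef
  have hD : ∀ s a, |Q₁ s a - Q₂ s a| ≤ D := fun s a =>
    Finset.le_sup' (fun p : S × A => |Q₁ p.1 p.2 - Q₂ p.1 p.2|) (Finset.mem_univ (s, a))
  have hD0 : 0 ≤ D := le_trans (abs_nonneg _) (hD (Classical.arbitrary S)
    (Classical.arbitrary A))
  -- value function difference bound
  have hV : ∀ s', |(∑ a, π₁ s' a * Q₁ s' a) - ∑ a, π₂ s' a * Q₂ s' a| ≤ T + D := by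
    intro s'
    have h2 : |(∑ a, π₂ s' a * Q₁ s' a) - ∑ a, π₂ s' a * Q₂ s' a| ≤ D := by
      rw [← Finset.sum_sub_distrib]
      calc |∑ a, (π₂ s' a * Q₁ s' a - π₂ s' a * Q₂ s' a)|
          ≤ ∑ a, |π₂ s' a * Q₁ s' a - π₂ s' a * Q₂ s' a| := Finset.abs_sum_le_sum_abs _ _
        _ = ∑ a, π₂ s' a * |Q₁ s' a - Q₂ s' a| := by
            refine Finset.sum_congr rfl fun a _ => ?_
            rw [← mul_sub, abs_mul, abs_of_nonneg (hπ₂0 s' a)]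
        _ ≤ ∑ a, π₂ s' a * D := Finset.sum_le_sum fun a _ =>
            mul_le_mul_of_nonneg_left (hD s' a) (hπ₂0 s' a)
        _ = D := by rw [← Finset.sum_mul, hπ₂1, one_mul]
    calc |(∑ a, π₁ s' a * Q₁ s' a) - ∑ a, π₂ s' a * Q₂ s' a|
        ≤ |(∑ a, π₁ s' a * Q₁ s' a) - ∑ a, π₂ s' a * Q₁ s' a| +
          |(∑ a, π₂ s' a * Q₁ s' a) - ∑ a, π₂ s' a * Q₂ s' a| := abs_sub_le _ _ _
      _ ≤ tv s' + D := add_le_add (htvlb s') h2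
      _ ≤ T + D := add_le_add_left (htvT s') D
  -- key contraction inequality
  have hkey : ∀ s a, |Q₁ s a - Q₂ s a| ≤ γ * (T + D) := by
    intro s a
    rw [hQ₁ s a, hQ₂ s a]
    rcases hI s with h | h
    · rw [h]
      simp only [zero_add, sub_zero, one_mul, add_sub_add_left_eq_sub]
      rw [← mul_sub, abs_mul, abs_of_pos hγ0, ← Finset.sum_sub_distrib]
      refine mul_le_mul_of_nonneg_left ?_ hγ0.le
      calc |∑ s', (P s a s' * ∑ a', π₁ s' a' * Q₁ s' a' -
              P s a s' * ∑ a', π₂ s' a' * Q₂ s' a')|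
          ≤ ∑ s', |P s a s' * ∑ a', π₁ s' a' * Q₁ s' a' -
              P s a s' * ∑ a', π₂ s' a' * Q₂ s' a'| := Finset.abs_sum_le_sum_abs _ _
        _ = ∑ s', P s a s' * |(∑ a', π₁ s' a' * Q₁ s' a') -
              ∑ a', π₂ s' a' * Q₂ s' a'| := by
            refine Finset.sum_congr rfl fun s' _ => ?_
            rw [← mul_sub, abs_mul, abs_of_nonneg (hP0 s a s')]
        _ ≤ ∑ s', P s a s' * (T + D) := Finset.sum_le_sum fun s' _ =>
            mul_le_mul_of_nonneg_left (hV s') (hP0 s a s')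
        _ = T + D := by rw [← Finset.sum_mul, hP1, one_mul]
    · rw [h]
      simp only [sub_self, zero_mul, add_zero, sub_self, abs_zero]
      positivity
  have hDle : D ≤ γ * (T + D) := Finset.sup'_le _ _ fun p _ => hkey p.1 p.2
  intro s a
  calc |Q₁ s a - Q₂ s a| ≤ D := hD s a
    _ ≤ γ * T / (1 - γ) := by rw [le_div_iff₀ h1γ]; nlinarith
    _ = γ / (1 - γ) * T := by ring
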